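/- Let s, t be positive integers, a ∈ [t], g ∈ [s], and let R_{a,g} = I_{s^{t-a-1}} ⊗ e_g ⊗ I_{s^a} be the row-selection matrix. Let K be an s×s block matrix whose block entries are column vectors of length r, and let c ∈ [t] with c = a. Then for any b, z ∈ [s], (R_{a,b} ⊗ I_r)·Φ_{t,a}(K)·R_{a,z}^T = I_{s^{t-1}} ⊗ K_{b,z}, where K_{b,z} is the (b,z) block entry of K. -/

import Mathlib

open Matrix

/-- The row-selection matrix `R_{a,g}` (for `t = m+1` levels): it selects the rows of
`[s^t]` (indexed by their base-`s` digit strings) whose `a`-th digit equals `g`. -/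
def Rsel {F : Type*} [Field F] {s m : ℕ} (a : Fin (m + 1)) (g : Fin s) :
    Matrix (Fin m → Fin s) (Fin (m + 1) → Fin s) F :=
  Matrix.of fun f f' => if f' = Fin.insertNth a g f then 1 else 0

/-- `R_{a,g} ⊗ I_r`. -/
def RselKron {F : Type*} [Field F] {s m r : ℕ} (a : Fin (m + 1)) (g : Fin s) :
    Matrix ((Fin m → Fin s) × Fin r) ((Fin (m + 1) → Fin s) × Fin r) F :=
  Matrix.of fun p q => Rsel a g p.1 q.1 * (if p.2 = q.2 then 1 else 0)

/-- The blow-up `Φ_{t,a}(K)` of an `s × s` block matrix `K` whose blocks are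
column vectors of length `r`; rows/columns of `[s^t]` are indexed by base-`s`
digit strings. -/
def blowUpVec {F : Type*} [Field F] {s r : ℕ} {t : ℕ} (a : Fin t)
    (K : Fin s → Fin s → Fin r → F) :
    Matrix ((Fin t → Fin s) × Fin r) (Fin t → Fin s) F :=
  Matrix.of fun p q =>
    if ∀ z, z ≠ a → p.1 z = q z then K (p.1 a) (q a) p.2 else 0

/-- For `c = a`: `(R_{a,b} ⊗ I_r) Φ_{t,a}(K) R_{a,z}ᵀ = I_{s^{t-1}} ⊗ K_{b,z}`. -/
theorem stmt8 {F : Type*} [Field F] {s m r : ℕ} (hs : 0 < s)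
    (a : Fin (m + 1)) (b z : Fin s) (K : Fin s → Fin s → Fin r → F) :
    (RselKron a b * blowUpVec a K : Matrix _ _ F) * (Rsel (F := F) a z)ᵀ =
      Matrix.of fun (p : (Fin m → Fin s) × Fin r) (q : Fin m → Fin s) =>
        if p.1 = q then K b z p.2 else 0 := by
  ext p q
  simp only [Matrix.mul_apply, Matrix.transpose_apply, Rsel, RselKron, blowUpVec,
    Matrix.of_apply]
  rw [Finset.sum_eq_single (Fin.insertNth a z q)]
  · erw [Matrix.mul_apply]
    rw [if_pos rfl, mul_one, Fintype.sum_prod_type]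
    rw [Finset.sum_eq_single (Fin.insertNth a b p.1)]
    · rw [Finset.sum_eq_single p.2]
      · have hiff : (∀ w : Fin (m+1), w ≠ a → (a.insertNth b p.1 : Fin (m+1) → Fin s) w = (a.insertNth z q : Fin (m+1) → Fin s) w) ↔ p.1 = q := by
          constructor
          · intro hc; funext i
            have := hc (a.succAbove i) (Fin.succAbove_ne a i)
            simpa [Fin.insertNth_apply_succAbove] using this
          · rintro rfl w hw
            obtain ⟨i, rfl⟩ := Fin.exists_succAbove_eq hw
            simp [Fin.insertNth_apply_succAbove]
        simp [hiff]
      · intro j _ hj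
        simp [Ne.symm hj]
      · intro h; exact absurd (Finset.mem_univ _) h
    · intro f _ hf
      simp [if_neg hf]
    · intro h; exact absurd (Finset.mem_univ _) h
  · intro f _ hf
    simp [if_neg hf]
  · intro h; exact absurd (Finset.mem_univ _) h
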